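/- Let H be a complex Hilbert space, A a bounded normal operator on H, and G a countable set of vectors in H such that: (i) for every g ∈ G there exists a natural number l(g) with A^{l(g)} g belonging to the linear span of { A^k g : 0 ≤ k < l(g) }; and (ii) the family (A^n g), indexed by pairs (g,n) with g ∈ G and 0 ≤ n ≤ l(g), is complete in H. Then H admits an orthonormal (Hilbert) basis consisting of eigenvectors of A; moreover, every g ∈ G is a sum of at most l(g) eigenvectors of A corresponding to distinct eigenvalues. -/

import Mathlib

open ContinuousLinearMap Submodule

local notation "⟪" x ", " y "⟫" => @inner ℂ _ _ x y

set_option linter.unusedSectionVars false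

section Helpers

variable {H : Type*} [NormedAddCommGroup H] [InnerProductSpace ℂ H] [CompleteSpace H]

lemma my_norm_adj {B : H →L[ℂ] H} (hB : adjoint B ∘L B = B ∘L adjoint B) (x : H) :
    ‖adjoint B x‖ = ‖B x‖ := by
  have h1 : ⟪adjoint B x, adjoint B x⟫ = ⟪B x, B x⟫ := by
    calc ⟪adjoint B x, adjoint B x⟫ = ⟪x, B (adjoint B x)⟫ := adjoint_inner_left B (adjoint B x) x
    _ = ⟪x, (B ∘L adjoint B) x⟫ := rfl
    _ = ⟪x, (adjoint B ∘L B) x⟫ := by rw [hB]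
    _ = ⟪x, adjoint B (B x)⟫ := rfl
    _ = ⟪B x, B x⟫ := adjoint_inner_right B x (B x)
  have h2 : ((‖adjoint B x‖ : ℂ)) ^ 2 = ((‖B x‖ : ℂ)) ^ 2 := by
    rwa [inner_self_eq_norm_sq_to_K, inner_self_eq_norm_sq_to_K] at h1
  have h3 : ‖adjoint B x‖ ^ 2 = ‖B x‖ ^ 2 := by exact_mod_cast h2
  nlinarith [norm_nonneg (adjoint B x), norm_nonneg (B x)]

lemma my_ker_adj {B : H →L[ℂ] H} (hB : adjoint B ∘L B = B ∘L adjoint B) {x : H}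
    (hx : B x = 0) : adjoint B x = 0 := by
  rw [← norm_eq_zero, my_norm_adj hB, hx, norm_zero]

lemma my_ker_sq {B : H →L[ℂ] H} (hB : adjoint B ∘L B = B ∘L adjoint B) {x : H}
    (hx : B (B x) = 0) : B x = 0 := by
  have h1 : adjoint B (B x) = 0 := my_ker_adj hB hx
  have h2 : ⟪B x, B x⟫ = 0 := by
    rw [← adjoint_inner_right B x (B x), h1, inner_zero_right]
  exact inner_self_eq_zero.mp h2

lemma my_ker_pow {B : H →L[ℂ] H} (hB : adjoint B ∘L B = B ∘L adjoint B) :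
    ∀ {k : ℕ} {x : H}, (B ^ k) x = 0 → B x = 0 := by
  intro k
  induction k with
  | zero => intro x hx; simp only [pow_zero, one_apply_eq_self] at hx; rw [hx, map_zero]
  | succ k ih =>
    intro x hx
    rw [pow_succ, mul_apply_eq_comp] at hx
    exact my_ker_sq hB (ih hx)

lemma my_normal_sub (A : H →L[ℂ] H) (hA : adjoint A ∘L A = A ∘L adjoint A) (μ : ℂ) :
    adjoint (A - μ • 1) ∘L (A - μ • 1) = (A - μ • 1) ∘L adjoint (A - μ • 1) := by
  have hadj : adjoint (A - μ • 1) = adjoint A - (starRingEnd ℂ μ) • 1 := by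
    rw [← star_eq_adjoint, star_sub, star_smul, star_one, star_eq_adjoint]
    rfl
  rw [hadj]
  have hc : Commute (adjoint A) A := hA
  have h1 : Commute (adjoint A - (starRingEnd ℂ μ) • 1) (A - μ • 1) := by
    refine Commute.sub_left ?_ ?_
    · exact Commute.sub_right hc ((Commute.one_right (adjoint A)).smul_right μ)
    · refine Commute.smul_left ?_ _
      exact Commute.sub_right (Commute.one_left A) ((Commute.one_left 1).smul_right μ)
  exact h1

lemma my_eigen_adjoint {A : H →L[ℂ] H} (hA : adjoint A ∘L A = A ∘L adjoint A) {x : H} {μ : ℂ}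
    (hx : A x = μ • x) : adjoint A x = (starRingEnd ℂ μ) • x := by
  have hB : (A - μ • 1) x = 0 := by simp [hx]
  have h1 : adjoint (A - μ • 1) x = 0 := my_ker_adj (my_normal_sub A hA μ) hB
  have hadj : adjoint (A - μ • 1) = adjoint A - (starRingEnd ℂ μ) • 1 := by
    rw [← star_eq_adjoint, star_sub, star_smul, star_one, star_eq_adjoint]
    rfl
  rw [hadj] at h1
  simpa [sub_eq_zero] using h1

lemma my_eigen_orth {A : H →L[ℂ] H} (hA : adjoint A ∘L A = A ∘L adjoint A) {x y : H} {μ ν : ℂ}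
    (hne : μ ≠ ν) (hx : A x = μ • x) (hy : A y = ν • y) : ⟪x, y⟫ = 0 := by
  have h1 : ⟪A x, y⟫ = (starRingEnd ℂ μ) * ⟪x, y⟫ := by rw [hx, inner_smul_left]
  have h2 : ⟪A x, y⟫ = (starRingEnd ℂ ν) * ⟪x, y⟫ := by
    rw [← adjoint_inner_right A x y, my_eigen_adjoint hA hy, inner_smul_right]
  have h3 : ((starRingEnd ℂ μ) - (starRingEnd ℂ ν)) * ⟪x, y⟫ = 0 := by
    rw [sub_mul, ← h1, ← h2, sub_self]
  rcases mul_eq_zero.mp h3 with h | h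
  · exact absurd ((starRingEnd ℂ).injective (by rwa [sub_eq_zero] at h)) hne
  · exact h

lemma my_coe_pow (B : H →L[ℂ] H) (k : ℕ) :
    ((B : H →ₗ[ℂ] H)) ^ k = ((B ^ k : H →L[ℂ] H) : H →ₗ[ℂ] H) := by
  induction k with
  | zero => rfl
  | succ k ih => rw [pow_succ, pow_succ, ih]; rfl

lemma my_sub_coe (A : H →L[ℂ] H) (μ : ℂ) :
    (A : H →ₗ[ℂ] H) - μ • 1 = ((A - μ • 1 : H →L[ℂ] H) : H →ₗ[ℂ] H) := by
  simp

lemma my_key (A : H →L[ℂ] H) (hA : adjoint A ∘L A = A ∘L adjoint A) (g : H) (n : ℕ)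
    (h : (A ^ n) g ∈ Submodule.span ℂ {x | ∃ k : ℕ, k < n ∧ x = (A ^ k) g})
    {x : H} (hx : x ∈ Submodule.span ℂ {x | ∃ k : ℕ, k < n ∧ x = (A ^ k) g}) :
    ∃ s : Finset ℂ, ∃ v : ℂ → H, s.card ≤ n ∧
      (∀ μ ∈ s, v μ ≠ 0 ∧ A (v μ) = μ • v μ) ∧ x = ∑ μ ∈ s, v μ := by
  classical
  set P : Set H := {x | ∃ k : ℕ, k < n ∧ x = (A ^ k) g} with hP
  set V : Submodule ℂ H := Submodule.span ℂ P with hV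
  have hPr : P = Set.range (fun k : Fin n => (A ^ (k : ℕ)) g) := by
    ext y
    constructor
    · rintro ⟨k, hk, rfl⟩; exact ⟨⟨k, hk⟩, rfl⟩
    · rintro ⟨⟨k, hk⟩, rfl⟩; exact ⟨k, hk, rfl⟩
  have hAV : ∀ y ∈ V, (A : H →ₗ[ℂ] H) y ∈ V := by
    have : V ≤ Submodule.comap (A : H →ₗ[ℂ] H) V := by
      rw [hV, Submodule.span_le]
      rintro y ⟨k, hk, rfl⟩
      have hy : (A : H →ₗ[ℂ] H) ((A ^ k) g) = (A ^ (k + 1)) g := by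
        rw [pow_succ', mul_apply_eq_comp]; rfl
      simp only [Submodule.mem_comap, SetLike.mem_coe, hy]
      rcases lt_or_eq_of_le (Nat.succ_le_of_lt hk) with h' | h'
      · exact Submodule.subset_span ⟨k + 1, h', rfl⟩
      · rw [show k + 1 = n from h']; exact h
    exact fun y hy => this hy
  haveI hfd : FiniteDimensional ℂ V := by
    rw [hV, hPr]; exact FiniteDimensional.span_of_finite ℂ (Set.finite_range _)
  have hrank : Module.finrank ℂ V ≤ n := by
    have h1 := finrank_range_le_card (R := ℂ) (fun k : Fin n => (A ^ (k : ℕ)) g)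
    rw [Set.finrank] at h1
    rw [hV, hPr]
    simpa using h1
  set f : Module.End ℂ V := (A : H →ₗ[ℂ] H).restrict hAV with hf
  have hx' : (⟨x, hx⟩ : V) ∈ ⨆ μ : ℂ, f.maxGenEigenspace μ := by
    rw [Module.End.iSup_maxGenEigenspace_eq_top f]; trivial
  rw [Submodule.mem_iSup_iff_exists_finsupp] at hx'
  obtain ⟨c, hc, hsum⟩ := hx'
  have heig : ∀ μ : ℂ, ∀ y : V, y ∈ f.maxGenEigenspace μ → A (y : H) = μ • (y : H) := by
    intro μ y hy
    rw [Module.End.mem_maxGenEigenspace] at hy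
    obtain ⟨k, hk⟩ := hy
    have h₂ : ∀ z ∈ V, ((A : H →ₗ[ℂ] H) - μ • 1) z ∈ V := by
      intro z hz
      have : ((A : H →ₗ[ℂ] H) - μ • 1) z = (A : H →ₗ[ℂ] H) z - μ • z := by simp
      rw [this]
      exact V.sub_mem (hAV z hz) (V.smul_mem μ hz)
    have hfe : f - μ • 1 = ((A : H →ₗ[ℂ] H) - μ • 1).restrict h₂ := by
      ext z
      simp [hf, LinearMap.restrict_apply]
    rw [hfe, Module.End.pow_restrict, LinearMap.restrict_apply] at hk
    have hk0 : ((((A : H →ₗ[ℂ] H) - μ • 1)) ^ k) (y : H) = 0 := by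
      simpa using congrArg Subtype.val hk
    rw [my_sub_coe A μ, my_coe_pow] at hk0
    have hB0 : (A - μ • 1) (y : H) = 0 := my_ker_pow (my_normal_sub A hA μ) hk0
    have h4 : A (y : H) - μ • (y : H) = 0 := by simpa using hB0
    rwa [sub_eq_zero] at h4
  refine ⟨c.support, fun μ => ((c μ : V) : H), ?_, ?_, ?_⟩
  · -- cardinality bound
    have hinj : Function.Injective (fun μ : ↥c.support => (μ : ℂ)) := Subtype.coe_injective
    have hev : ∀ μ : ↥c.support, f.HasEigenvector (μ : ℂ) (c μ) := by
      intro μ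
      constructor
      · rw [Module.End.mem_eigenspace_iff]
        have h5 : A ((c μ : V) : H) = (μ : ℂ) • ((c μ : V) : H) := heig μ _ (hc μ)
        apply Subtype.ext
        simpa [hf, LinearMap.restrict_apply] using h5
      · exact Finsupp.mem_support_iff.mp μ.2
    have hli : LinearIndependent ℂ (fun μ : ↥c.support => c μ) :=
      Module.End.eigenvectors_linearIndependent' f (fun μ : ↥c.support => (μ : ℂ)) hinj _ hev
    have := hli.fintype_card_le_finrank
    simpa using this.trans hrank
  · intro μ hμ
    refine ⟨?_, heig μ _ (hc μ)⟩
    simp only [ne_eq, ZeroMemClass.coe_eq_zero]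
    exact Finsupp.mem_support_iff.mp hμ
  · have h6 := congrArg (Subtype.val : V → H) hsum
    rw [Finsupp.sum] at h6
    simpa using h6.symm

lemma my_maps (T : H →L[ℂ] H) {w : Set H} (hw : ∀ e ∈ w, T e ∈ Submodule.span ℂ w) :
    ∀ y ∈ (Submodule.span ℂ w).topologicalClosure, T y ∈ (Submodule.span ℂ w).topologicalClosure := by
  intro y hy
  rw [← SetLike.mem_coe, Submodule.topologicalClosure_coe] at hy ⊢
  have h1 : Submodule.map (T : H →ₗ[ℂ] H) (Submodule.span ℂ w) ≤ Submodule.span ℂ w := by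
    rw [Submodule.map_span, Submodule.span_le]
    rintro _ ⟨e, he, rfl⟩
    exact hw e he
  have h2 : T y ∈ T '' closure (Submodule.span ℂ w : Set H) := ⟨y, hy, rfl⟩
  have h3 : T '' closure (Submodule.span ℂ w : Set H) ⊆ closure (T '' (Submodule.span ℂ w : Set H)) :=
    image_closure_subset_closure_image T.continuous
  have h4 : T '' (Submodule.span ℂ w : Set H) ⊆ (Submodule.span ℂ w : Set H) := by
    rw [show T '' (Submodule.span ℂ w : Set H) = ↑(Submodule.map (T : H →ₗ[ℂ] H) (Submodule.span ℂ w)) from rfl]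
    exact_mod_cast h1
  exact closure_mono h4 (h3 h2)


end Helpers

theorem stmt_15 {H : Type*} [NormedAddCommGroup H] [InnerProductSpace ℂ H] [CompleteSpace H]
    (A : H →L[ℂ] H) (hA : adjoint A ∘L A = A ∘L adjoint A)
    (G : Set H) (hG : G.Countable) (l : ↥G → ℕ)
    (hl : ∀ g : ↥G, (A ^ l g) (g : H) ∈
      Submodule.span ℂ {x | ∃ k : ℕ, k < l g ∧ x = (A ^ k) (g : H)})
    (hcomplete :
      (Submodule.span ℂ
        {x | ∃ g : ↥G, ∃ n : ℕ, n ≤ l g ∧ x = (A ^ n) (g : H)}).topologicalClosure = ⊤) :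
    (∃ (ι : Type) (b : HilbertBasis ι ℂ H), ∀ i : ι, ∃ μ : ℂ, A (b i) = μ • b i) ∧
    ∀ g : ↥G, ∃ k : ℕ, k ≤ l g ∧ ∃ (v : Fin k → H) (μ : Fin k → ℂ),
      Function.Injective μ ∧ (∀ j, v j ≠ 0 ∧ A (v j) = μ j • v j) ∧
      (g : H) = ∑ j, v j := by
  classical
  have hmemV : ∀ (g : ↥G) (n : ℕ), n ≤ l g →
      (A ^ n) (g : H) ∈ Submodule.span ℂ {x | ∃ k : ℕ, k < l g ∧ x = (A ^ k) (g : H)} := by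
    intro g n hn
    rcases lt_or_eq_of_le hn with h' | h'
    · exact Submodule.subset_span ⟨n, h', rfl⟩
    · rw [h']; exact hl g
  have hkey : ∀ (g : ↥G) (n : ℕ), n ≤ l g → ∃ s : Finset ℂ, ∃ v : ℂ → H, s.card ≤ l g ∧
      (∀ μ ∈ s, v μ ≠ 0 ∧ A (v μ) = μ • v μ) ∧ (A ^ n) (g : H) = ∑ μ ∈ s, v μ :=
    fun g n hn => my_key A hA (g : H) (l g) (hl g) (hmemV g n hn)
  constructor
  · -- Part 1
    set S : Set H := {x : H | ∃ μ : ℂ, A x = μ • x} with hS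
    have hSdense : (Submodule.span ℂ S).topologicalClosure = ⊤ := by
      apply top_unique
      rw [← hcomplete]
      apply Submodule.topologicalClosure_mono
      rw [Submodule.span_le]
      rintro x ⟨g, n, hn, rfl⟩
      obtain ⟨s, v, _, hv, hsum⟩ := hkey g n hn
      rw [SetLike.mem_coe, hsum]
      exact Submodule.sum_mem _ fun μ hμ => Submodule.subset_span ⟨μ, (hv μ hμ).2⟩
    haveI hsep : TopologicalSpace.SeparableSpace H := by
      haveI : Countable ↥G := hG.to_subtype
      have hTc : {x | ∃ g : ↥G, ∃ n : ℕ, n ≤ l g ∧ x = (A ^ n) (g : H)}.Countable := by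
        have hsub : {x | ∃ g : ↥G, ∃ n : ℕ, n ≤ l g ∧ x = (A ^ n) (g : H)} ⊆
            Set.range (fun p : ↥G × ℕ => (A ^ p.2) ((p.1 : H))) := by
          rintro x ⟨g, n, hn, rfl⟩; exact ⟨(g, n), rfl⟩
        exact (Set.countable_range _).mono hsub
      have h2 : TopologicalSpace.IsSeparable (Set.univ : Set H) := by
        have h3 : closure (Submodule.span ℂ
            {x | ∃ g : ↥G, ∃ n : ℕ, n ≤ l g ∧ x = (A ^ n) (g : H)} : Set H) = Set.univ := by
          have h5 := congrArg (SetLike.coe) hcomplete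
          rwa [Submodule.topologicalClosure_coe, Submodule.top_coe] at h5
        rw [← h3]
        exact (hTc.isSeparable.span).closure
      exact TopologicalSpace.isSeparable_univ_iff.mp h2
    have hzorn : ∀ c ⊆ {s : Set H | s ⊆ S ∧ Orthonormal ℂ ((↑) : s → H)},
        IsChain (· ⊆ ·) c → ∃ ub ∈ {s : Set H | s ⊆ S ∧ Orthonormal ℂ ((↑) : s → H)},
          ∀ s ∈ c, s ⊆ ub := by
      intro c hc hchain
      refine ⟨⋃₀ c, ⟨?_, ?_⟩, fun s hs => Set.subset_sUnion_of_mem hs⟩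
      · exact Set.sUnion_subset fun s hs => (hc hs).1
      · exact orthonormal_sUnion_of_directed hchain.directedOn fun s hs => (hc hs).2
    obtain ⟨w, hw⟩ := zorn_subset {s : Set H | s ⊆ S ∧ Orthonormal ℂ ((↑) : s → H)} hzorn
    obtain ⟨⟨hwS, hwon⟩, hwmax⟩ := hw
    set M : Submodule ℂ H := (Submodule.span ℂ w).topologicalClosure with hM
    haveI : CompleteSpace M := (Submodule.isClosed_topologicalClosure _).completeSpace_coe
    have hAM : ∀ y ∈ M, A y ∈ M := by
      apply my_maps
      intro e he
      obtain ⟨μ, hμ⟩ := hwS he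
      rw [hμ]
      exact Submodule.smul_mem _ _ (Submodule.subset_span he)
    have hA'M : ∀ y ∈ M, adjoint A y ∈ M := by
      apply my_maps
      intro e he
      obtain ⟨μ, hμ⟩ := hwS he
      rw [my_eigen_adjoint hA hμ]
      exact Submodule.smul_mem _ _ (Submodule.subset_span he)
    have hwM : w ⊆ (M : Set H) :=
      fun e he => (Submodule.le_topologicalClosure _) (Submodule.subset_span he)
    have hSM : S ⊆ (M : Set H) := by
      rintro x ⟨μ, hμ⟩
      set m : H := (orthogonalProjection M x : H) with hm
      set u : H := x - m with hu
      have hmM : m ∈ M := (orthogonalProjection M x).2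
      have huM : u ∈ Mᗮ := sub_starProjection_mem_orthogonal x
      have hAu : A u ∈ Mᗮ := by
        rw [Submodule.mem_orthogonal]
        intro z hz
        rw [← adjoint_inner_left A u z]
        exact (Submodule.mem_orthogonal M u).mp huM _ (hA'M z hz)
      have hxmu : x = m + u := by rw [hu]; abel
      have hueig : A u = μ • u := by
        have h7 : A m + A u = μ • m + μ • u := by
          rw [← map_add, ← smul_add, ← hxmu, hμ]
        have h8 : A u - μ • u = μ • m - A m := by
          have := congrArg (fun z => z - A m - μ • u) h7
          rw [sub_eq_sub_iff_add_eq_add]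
          linear_combination (norm := abel) h7
        have h9 : A u - μ • u ∈ Mᗮ := Submodule.sub_mem _ hAu (Submodule.smul_mem _ _ huM)
        have h10 : A u - μ • u ∈ M := by
          rw [h8]; exact Submodule.sub_mem _ (Submodule.smul_mem _ _ hmM) (hAM m hmM)
        have h11 : A u - μ • u = 0 :=
          (Submodule.mem_bot ℂ).mp ((M.orthogonal_disjoint).le_bot ⟨h10, h9⟩)
        rwa [sub_eq_zero] at h11
      by_cases hu0 : u = 0
      · rw [hxmu, hu0, add_zero]; exact hmM
      exfalso
      set z : H := (‖u‖ : ℂ)⁻¹ • u with hz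
      have hzne : z ≠ 0 := by
        simp only [hz, ne_eq, smul_eq_zero, inv_eq_zero, Complex.ofReal_eq_zero,
          norm_eq_zero]
        push_neg
        exact ⟨fun h => absurd h hu0, hu0⟩
      have hznorm : ‖z‖ = 1 := by
        rw [hz, norm_smul]
        simp [norm_ne_zero_iff.mpr hu0]
      have hzeig : A z = μ • z := by
        rw [hz, map_smul, hueig, smul_comm]
      have hzMperp : z ∈ Mᗮ := Submodule.smul_mem _ _ huM
      have hznw : z ∉ w := by
        intro hzw
        have : z ∈ M := hwM hzw
        have : z = 0 := (Submodule.mem_bot ℂ).mp ((M.orthogonal_disjoint).le_bot ⟨this, hzMperp⟩)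
        exact hzne this
      have hins : insert z w ∈ {s : Set H | s ⊆ S ∧ Orthonormal ℂ ((↑) : s → H)} := by
        constructor
        · rw [Set.insert_subset_iff]
          exact ⟨⟨μ, hzeig⟩, hwS⟩
        · rw [orthonormal_subtype_iff_ite]
          have hwon' := orthonormal_subtype_iff_ite.mp hwon
          intro a ha b hb
          rcases Set.mem_insert_iff.mp ha with rfl | ha'
          · rcases Set.mem_insert_iff.mp hb with rfl | hb'
            · rw [if_pos rfl, inner_self_eq_norm_sq_to_K, hznorm]
              norm_num
            · have hb'' : b ∈ M := hwM hb'
              have h12 : ⟪b, z⟫ = 0 := (Submodule.mem_orthogonal M z).mp hzMperp b hb''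
              have h12' : ⟪z, b⟫ = 0 := by
                rw [← inner_conj_symm, h12, map_zero]
              rw [h12', if_neg]
              rintro rfl
              exact hznw hb'
          · rcases Set.mem_insert_iff.mp hb with rfl | hb'
            · have h13 : ⟪a, z⟫ = 0 := (Submodule.mem_orthogonal M z).mp hzMperp a (hwM ha')
              rw [h13, if_neg]
              rintro rfl
              exact hznw ha'
            · exact hwon' a ha' b hb'
      have : insert z w ⊆ w := hwmax hins (Set.subset_insert z w)
      exact hznw (this (Set.mem_insert z w))
    have hMtop : M = ⊤ := by
      apply top_unique
      rw [← hSdense]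
      apply Submodule.topologicalClosure_minimal
      · rw [Submodule.span_le]; exact hSM
      · exact Submodule.isClosed_topologicalClosure _
    have hwtotal : ⊤ ≤ (Submodule.span ℂ (Set.range ((↑) : w → H))).topologicalClosure := by
      rw [Subtype.range_coe]
      exact hMtop.ge
    let b0 : HilbertBasis ↥w ℂ H := HilbertBasis.mk hwon hwtotal
    haveI hwc : Countable ↥w := by
      have hdisj : Pairwise (Function.onFun Disjoint fun e : ↥w => Metric.ball (e : H) (1 / 2)) := by
        intro e f hef
        have hef' : (e : H) ≠ (f : H) := fun h => hef (Subtype.ext h)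
        have h15 := orthonormal_subtype_iff_ite.mp hwon
        have he1 : ⟪(e : H), (e : H)⟫ = 1 := by simpa using h15 (e : H) e.2 (e : H) e.2
        have hf1 : ⟪(f : H), (f : H)⟫ = 1 := by simpa using h15 (f : H) f.2 (f : H) f.2
        have hef0 : ⟪(e : H), (f : H)⟫ = 0 := by
          simpa [hef'] using h15 (e : H) e.2 (f : H) f.2
        have hfe0 : ⟪(f : H), (e : H)⟫ = 0 := by
          simpa [Ne.symm hef'] using h15 (f : H) f.2 (e : H) e.2
        have h14 : ⟪(e : H) - f, (e : H) - f⟫ = 2 := by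
          rw [inner_sub_sub_self, he1, hf1, hef0, hfe0]
          ring
        have h16 : ‖(e : H) - f‖ ^ 2 = 2 := by
          have h16' := inner_self_eq_norm_sq (𝕜 := ℂ) ((e : H) - (f : H))
          rw [h14] at h16'
          simpa using h16'.symm
        have h17 : (1 : ℝ) ≤ dist (e : H) (f : H) := by
          rw [dist_eq_norm]
          nlinarith [norm_nonneg ((e : H) - f)]
        exact Metric.ball_disjoint_ball (by linarith)
      exact hdisj.countable_of_isOpen_disjoint (fun i => Metric.isOpen_ball)
        (fun i => Metric.nonempty_ball.mpr (by norm_num))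
    obtain ⟨fc, hfc⟩ := exists_injective_nat ↥w
    set e : ↥w ≃ ↥(Set.range fc) := Equiv.ofInjective fc hfc with he
    set v : ↥(Set.range fc) → H := fun i => ((e.symm i : ↥w) : H) with hv
    have hvon : Orthonormal ℂ v := hwon.comp _ e.symm.injective
    have hvrange : Set.range v = w := by
      ext x
      constructor
      · rintro ⟨i, rfl⟩; exact (e.symm i).2
      · intro hx; exact ⟨e ⟨x, hx⟩, by simp [hv]⟩
    have hvtotal : ⊤ ≤ (Submodule.span ℂ (Set.range v)).topologicalClosure := by
      rw [hvrange]
      exact hMtop.ge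
    refine ⟨↥(Set.range fc), HilbertBasis.mk hvon hvtotal, ?_⟩
    intro i
    rw [HilbertBasis.coe_mk]
    exact hwS (e.symm i).2
  · -- Part 2
    intro g
    obtain ⟨s, v, hcard, hv, hsum⟩ := hkey g 0 (Nat.zero_le _)
    have hgsum : (g : H) = ∑ μ ∈ s, v μ := by
      rw [← hsum, pow_zero, one_apply_eq_self]
    refine ⟨s.card, hcard, fun j => v (s.equivFin.symm j), fun j => (s.equivFin.symm j : ℂ),
      ?_, ?_, ?_⟩
    · intro i j hij
      exact (Equiv.injective s.equivFin.symm) (Subtype.coe_injective hij)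
    · intro j
      exact hv _ (s.equivFin.symm j).2
    · rw [hgsum, ← Finset.sum_coe_sort s v]
      exact (Equiv.sum_comp s.equivFin.symm (fun a : ↥s => v (a : ℂ))).symm
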